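/- Assume ĥ < 1, f is four times continuously differentiable on [x_1, x_n] with |f⁽⁴⁾(x)| ≤ L for all x, there exists K > 0 with ĥ/h_j ≤ K for all 1 ≤ j ≤ n − 1, and 3 − log₂(ĥ) < i_0 < (n − 1) + log₂(ĥ). Let f̃_{i_0} satisfy |f'(x_{i_0}) − f̃_{i_0}| ≤ T·ĥ^{p} with T, p > 0, and let ḟ_2, …, ḟ_{i_0−1} and ḟ_{i_0+1}, …, ḟ_{n−1} solve the modified (block-diagonal) system consisting of the left and right subsystems; set ḟ_{i_0} = f̃_{i_0}, ḟ_1 = f'(x_1), ḟ_n = f'(x_n). Then there exist a constant C depending only on K, L, T and integers l_0 = ⌊(i_0 − 2) + log₂(ĥ)⌋ + 1 < i_0 < l_1 = ⌈(i_0 + 2) − log₂(ĥ)⌉ − 1 such that |ḟ_i − f'(x_i)| ≤ C·ĥ^{min(3, p+1)} for 2 ≤ i ≤ l_0 and for l_1 ≤ i ≤ n − 1, and |ḟ_i − f'(x_i)| ≤ C·ĥ^{min(3, p)} for l_0 < i < l_1. Moreover, the piecewise cubic whose restriction to each [x_i, x_{i+1}] is the cubic Hermite interpolant of (f_i, ḟ_i),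 (f_{i+1}, ḟ_{i+1}) has matching second derivatives of its adjacent pieces at every interior knot x_j with j ≠ i_0, i.e. it is C² on [x_1, x_n] except possibly at x_{i_0}. -/

import Mathlib

/-- Mesh spacing `hᵢ = xᵢ₊₁ − xᵢ`. -/
noncomputable def hstep (x : ℕ → ℝ) (i : ℕ) : ℝ := x (i + 1) - x i

/-- Divided difference `mᵢ = (f(xᵢ₊₁) − f(xᵢ))/hᵢ`. -/
noncomputable def mslope (x : ℕ → ℝ) (f : ℝ → ℝ) (i : ℕ) : ℝ :=
  (f (x (i + 1)) - f (x i)) / (x (i + 1) - x i)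

/-- `λᵢ = hᵢ₊₁/(hᵢ + hᵢ₊₁)`. -/
noncomputable def lamb (x : ℕ → ℝ) (i : ℕ) : ℝ :=
  hstep x (i + 1) / (hstep x i + hstep x (i + 1))

/-- `μᵢ = hᵢ/(hᵢ + hᵢ₊₁)`. -/
noncomputable def mub (x : ℕ → ℝ) (i : ℕ) : ℝ :=
  hstep x i / (hstep x i + hstep x (i + 1))

/-- The cubic Hermite interpolant on `[xi, xip]` of the data
`(fi, di)`, `(fip, dip)`. -/
noncomputable def hermite (xi xip fi fip di dip : ℝ) : ℝ → ℝ := fun t =>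
  fi + di * (t - xi)
    + (((fip - fi) / (xip - xi) - di) / (xip - xi)) * (t - xi) ^ 2
    + ((dip + di - 2 * ((fip - fi) / (xip - xi))) / (xip - xi) ^ 2)
        * (t - xi) ^ 2 * (t - xip)


open Set

lemma hermite_deriv (xi xip fi fip di dip u : ℝ) :
    deriv (hermite xi xip fi fip di dip) u =
      di + (((fip - fi) / (xip - xi) - di) / (xip - xi)) * (2 * (u - xi))
        + ((dip + di - 2 * ((fip - fi) / (xip - xi))) / (xip - xi) ^ 2)
            * (2 * (u - xi) * (u - xip) + (u - xi) ^ 2) := by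
  have h1 : HasDerivAt (fun t : ℝ => t - xi) 1 u := (hasDerivAt_id u).sub_const xi
  have h2 : HasDerivAt (fun t : ℝ => t - xip) 1 u := (hasDerivAt_id u).sub_const xip
  have h3 : HasDerivAt (fun t : ℝ => (t - xi) ^ 2) (2 * (u - xi)) u := by
    simpa using h1.fun_pow 2
  have h4 : HasDerivAt (fun t : ℝ => (t - xi) ^ 2 * (t - xip))
      (2 * (u - xi) * (u - xip) + (u - xi) ^ 2) u := by
    simpa using h3.fun_mul h2
  have h5 := (((hasDerivAt_const u fi).fun_add (h1.const_mul di)).fun_add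
      (h3.const_mul (((fip - fi) / (xip - xi) - di) / (xip - xi)))).fun_add
      (h4.const_mul ((dip + di - 2 * ((fip - fi) / (xip - xi))) / (xip - xi) ^ 2))
  have h6 : HasDerivAt (hermite xi xip fi fip di dip)
      (di + (((fip - fi) / (xip - xi) - di) / (xip - xi)) * (2 * (u - xi))
        + ((dip + di - 2 * ((fip - fi) / (xip - xi))) / (xip - xi) ^ 2)
            * (2 * (u - xi) * (u - xip) + (u - xi) ^ 2)) u := by
    convert! h5 using 1
    · funext t; simp only [hermite]; ring
    · ring
  exact h6.deriv

lemma hermite_deriv2 (xi xip fi fip di dip t : ℝ) :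
    deriv (deriv (hermite xi xip fi fip di dip)) t =
      2 * (((fip - fi) / (xip - xi) - di) / (xip - xi))
        + ((dip + di - 2 * ((fip - fi) / (xip - xi))) / (xip - xi) ^ 2)
            * (2 * (t - xip) + 4 * (t - xi)) := by
  have hfun : deriv (hermite xi xip fi fip di dip) = fun u =>
      di + (((fip - fi) / (xip - xi) - di) / (xip - xi)) * (2 * (u - xi))
        + ((dip + di - 2 * ((fip - fi) / (xip - xi))) / (xip - xi) ^ 2)
            * (2 * (u - xi) * (u - xip) + (u - xi) ^ 2) := funext fun u => hermite_deriv ..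
  rw [hfun]
  have h1 : HasDerivAt (fun t : ℝ => t - xi) 1 t := (hasDerivAt_id t).sub_const xi
  have h2 : HasDerivAt (fun t : ℝ => t - xip) 1 t := (hasDerivAt_id t).sub_const xip
  have h3 : HasDerivAt (fun u : ℝ => (u - xi) ^ 2) (2 * (t - xi)) t := by
    simpa using h1.fun_pow 2
  have h4 : HasDerivAt (fun u : ℝ => 2 * (u - xi) * (u - xip) + (u - xi) ^ 2)
      (2 * (t - xip) + 2 * (t - xi) + 2 * (t - xi)) t := by
    have := ((h1.const_mul 2).fun_mul h2).fun_add h3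
    convert! this using 1
    ring
  have h5 := ((hasDerivAt_const t di).fun_add
      ((h1.const_mul 2).const_mul (((fip - fi) / (xip - xi) - di) / (xip - xi)))).fun_add
      (h4.const_mul ((dip + di - 2 * ((fip - fi) / (xip - xi))) / (xip - xi) ^ 2))
  have h6 : HasDerivAt (fun u : ℝ =>
      di + (((fip - fi) / (xip - xi) - di) / (xip - xi)) * (2 * (u - xi))
        + ((dip + di - 2 * ((fip - fi) / (xip - xi))) / (xip - xi) ^ 2)
            * (2 * (u - xi) * (u - xip) + (u - xi) ^ 2))
      (2 * (((fip - fi) / (xip - xi) - di) / (xip - xi))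
        + ((dip + di - 2 * ((fip - fi) / (xip - xi))) / (xip - xi) ^ 2)
            * (2 * (t - xip) + 4 * (t - xi))) t := by
    convert! h5 using 1
    ring
  exact h6.deriv

lemma alg_row (a b c da db dc mL mR : ℝ) (h4 : c - a ≠ 0)
    (hrow : (c - b) / ((b - a) + (c - b)) * da + 2 * db + (b - a) / ((b - a) + (c - b)) * dc
      = 3 * ((c - b) / ((b - a) + (c - b)) * mL + (b - a) / ((b - a) + (c - b)) * mR)) :
    (2*da + 4*db - 6*mL) * (c - b) = (6*mR - 4*db - 2*dc) * (b - a) := by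
  rw [show b - a + (c - b) = c - a by ring] at hrow
  field_simp at hrow
  linear_combination 2 * hrow

lemma knot_eq {a b c fa fb fc da db dc : ℝ} (hab : a < b) (hbc : b < c)
    (hrow : (c - b) / ((b - a) + (c - b)) * da + 2 * db + (b - a) / ((b - a) + (c - b)) * dc
      = 3 * ((c - b) / ((b - a) + (c - b)) * ((fb - fa) / (b - a))
           + (b - a) / ((b - a) + (c - b)) * ((fc - fb) / (c - b)))) :
    deriv (deriv (hermite a b fa fb da db)) b = deriv (deriv (hermite b c fb fc db dc)) b := by
  rw [hermite_deriv2, hermite_deriv2]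
  have h1 : b - a ≠ 0 := sub_ne_zero.2 (by linarith)
  have h2 : c - b ≠ 0 := sub_ne_zero.2 (by linarith)
  have h4 : c - a ≠ 0 := sub_ne_zero.2 (by linarith)
  have hL : 2 * (((fb - fa) / (b - a) - da) / (b - a))
        + ((db + da - 2 * ((fb - fa) / (b - a))) / (b - a) ^ 2)
            * (2 * (b - b) + 4 * (b - a))
      = (2*da + 4*db - 6*((fb - fa) / (b - a))) / (b-a) := by
    field_simp
    ring
  have hR : 2 * (((fc - fb) / (c - b) - db) / (c - b))
        + ((dc + db - 2 * ((fc - fb) / (c - b))) / (c - b) ^ 2)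
            * (2 * (b - c) + 4 * (b - b))
      = (6*((fc - fb) / (c - b)) - 4*db - 2*dc) / (c-b) := by
    field_simp
    ring
  rw [hL, hR, div_eq_div_iff h1 h2]
  exact alg_row a b c da db dc _ _ h4 hrow


lemma taylor_step {A B c : ℝ} {g g' : ℝ → ℝ} {k : ℕ}
    (hg : ∀ u ∈ Icc A B, HasDerivWithinAt g (g' u) (Icc A B) u)
    {b : ℝ} (hb : b ∈ Icc A B) (hc : 0 ≤ c)
    (hbd : ∀ u ∈ Icc A B, |g' u| ≤ c * |u - b| ^ k)
    {t : ℝ} (ht : t ∈ Icc A B) :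
    |g t - g b| ≤ c * |t - b| ^ (k + 1) := by
  set σ : Set ℝ := Icc (min b t) (max b t) with hσdef
  have hσ : σ ⊆ Icc A B := by
    apply Icc_subset_Icc
    · exact le_min hb.1 ht.1
    · exact max_le hb.2 ht.2
  have hmem : ∀ u ∈ σ, |u - b| ≤ |t - b| := by
    intro u hu
    have h1 : min b t ≤ u := hu.1
    have h2 : u ≤ max b t := hu.2
    rcases le_total b t with h | h
    · rw [min_eq_left h] at h1
      rw [max_eq_right h] at h2
      rw [abs_of_nonneg (by linarith), abs_of_nonneg (by linarith : (0:ℝ) ≤ t - b)]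
      linarith
    · rw [min_eq_right h] at h1
      rw [max_eq_left h] at h2
      rw [abs_of_nonpos (by linarith), abs_of_nonpos (by linarith : t - b ≤ 0)]
      linarith
  have key := Convex.norm_image_sub_le_of_norm_hasDerivWithin_le
    (f := g) (f' := g') (C := c * |t - b| ^ k)
    (fun u hu => (hg u (hσ hu)).mono hσ)
    (fun u hu => by
      rw [Real.norm_eq_abs]
      exact le_trans (hbd u (hσ hu))
        (mul_le_mul_of_nonneg_left (pow_le_pow_left₀ (abs_nonneg _) (hmem u hu) k) hc))
    (convex_Icc _ _)
    (show b ∈ σ from ⟨min_le_left _ _, le_max_left _ _⟩)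
    (show t ∈ σ from ⟨min_le_right _ _, le_max_right _ _⟩)
  rw [Real.norm_eq_abs, Real.norm_eq_abs] at key
  calc |g t - g b| ≤ c * |t - b| ^ k * |t - b| := key
    _ = c * |t - b| ^ (k + 1) := by rw [pow_succ]; ring

lemma taylor4 {A B L : ℝ} (hAB : A < B) {f : ℝ → ℝ}
    (hf : ContDiffOn ℝ 4 f (Icc A B))
    (hL : ∀ u ∈ Icc A B, |iteratedDerivWithin 4 f (Icc A B) u| ≤ L)
    {b t : ℝ} (hb : b ∈ Icc A B) (ht : t ∈ Icc A B) :
    |f t - f b - iteratedDerivWithin 1 f (Icc A B) b * (t - b)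
        - iteratedDerivWithin 2 f (Icc A B) b * (t - b) ^ 2 / 2
        - iteratedDerivWithin 3 f (Icc A B) b * (t - b) ^ 3 / 6| ≤ L * |t - b| ^ 4 ∧
    |iteratedDerivWithin 1 f (Icc A B) t - iteratedDerivWithin 1 f (Icc A B) b
        - iteratedDerivWithin 2 f (Icc A B) b * (t - b)
        - iteratedDerivWithin 3 f (Icc A B) b * (t - b) ^ 2 / 2| ≤ L * |t - b| ^ 3 := by
  have hs : UniqueDiffOn ℝ (Icc A B) := uniqueDiffOn_Icc hAB
  set s : Set ℝ := Icc A B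
  set F1 := iteratedDerivWithin 1 f s
  set F2 := iteratedDerivWithin 2 f s
  set F3 := iteratedDerivWithin 3 f s
  set F4 := iteratedDerivWithin 4 f s
  have hL0 : 0 ≤ L := le_trans (abs_nonneg _) (hL b hb)
  have hd : ∀ k : ℕ, k < 4 → ∀ u ∈ s, HasDerivWithinAt (iteratedDerivWithin k f s)
      (iteratedDerivWithin (k+1) f s u) s u := by
    intro k hk u hu
    have hdiff := hf.differentiableOn_iteratedDerivWithin
      (by exact_mod_cast hk : (k : WithTop ℕ∞) < 4) hs
    have h1 := (hdiff u hu).hasDerivWithinAt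
    rwa [← iteratedDerivWithin_succ] at h1
  have hd0 : ∀ u ∈ s, HasDerivWithinAt f (F1 u) s u := by
    intro u hu
    have := hd 0 (by norm_num) u hu
    simpa only [iteratedDerivWithin_zero, zero_add] using this
  -- step 3
  have step3 : ∀ t ∈ s, |F3 t - F3 b| ≤ L * |t - b| ^ 1 := by
    intro t ht
    refine taylor_step (hd 3 (by norm_num)) hb hL0 (fun u hu => ?_) ht
    simpa using hL u hu
  -- step 2
  have step2 : ∀ t ∈ s, |F2 t - F2 b - F3 b * (t - b)| ≤ L * |t - b| ^ 2 := by
    intro t ht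
    have hg : ∀ u ∈ s, HasDerivWithinAt (fun u => F2 u - F3 b * u) (F3 u - F3 b) s u := by
      intro u hu
      simpa using (hd 2 (by norm_num) u hu).fun_sub ((hasDerivWithinAt_id u s).const_mul (F3 b))
    have := taylor_step hg hb hL0 (fun u hu => step3 u hu) ht
    calc |F2 t - F2 b - F3 b * (t - b)|
        = |(F2 t - F3 b * t) - (F2 b - F3 b * b)| := by ring_nf
      _ ≤ L * |t - b| ^ 2 := this
  -- step 1
  have step1 : ∀ t ∈ s, |F1 t - F1 b - F2 b * (t - b) - F3 b * (t - b) ^ 2 / 2|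
      ≤ L * |t - b| ^ 3 := by
    intro t ht
    have hg : ∀ u ∈ s, HasDerivWithinAt (fun u => F1 u - F2 b * u - F3 b * (u - b) ^ 2 / 2)
        (F2 u - F2 b - F3 b * (u - b)) s u := by
      intro u hu
      have h1 : HasDerivWithinAt (fun u : ℝ => F3 b * (u - b) ^ 2 / 2) (F3 b * (u - b)) s u := by
        have := ((((hasDerivWithinAt_id u s).sub_const b).fun_pow 2).const_mul (F3 b)).div_const 2
        convert! this using 1
        simp; ring
      have := ((hd 1 (by norm_num) u hu).fun_sub ((hasDerivWithinAt_id u s).const_mul (F2 b))).fun_sub h1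
      convert! this using 1
      ring
    have := taylor_step hg hb hL0 (fun u hu => step2 u hu) ht
    calc |F1 t - F1 b - F2 b * (t - b) - F3 b * (t - b) ^ 2 / 2|
        = |(F1 t - F2 b * t - F3 b * (t - b) ^ 2 / 2)
            - (F1 b - F2 b * b - F3 b * (b - b) ^ 2 / 2)| := by ring_nf
      _ ≤ L * |t - b| ^ 3 := this
  -- step 0
  have step0 : |f t - f b - F1 b * (t - b) - F2 b * (t - b) ^ 2 / 2 - F3 b * (t - b) ^ 3 / 6|
      ≤ L * |t - b| ^ 4 := by
    have hg : ∀ u ∈ s, HasDerivWithinAt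
        (fun u => f u - F1 b * u - F2 b * (u - b) ^ 2 / 2 - F3 b * (u - b) ^ 3 / 6)
        (F1 u - F1 b - F2 b * (u - b) - F3 b * (u - b) ^ 2 / 2) s u := by
      intro u hu
      have h1 : HasDerivWithinAt (fun u : ℝ => F2 b * (u - b) ^ 2 / 2) (F2 b * (u - b)) s u := by
        have := ((((hasDerivWithinAt_id u s).sub_const b).fun_pow 2).const_mul (F2 b)).div_const 2
        convert! this using 1
        simp; ring
      have h2 : HasDerivWithinAt (fun u : ℝ => F3 b * (u - b) ^ 3 / 6)
          (F3 b * (u - b) ^ 2 / 2) s u := by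
        have := ((((hasDerivWithinAt_id u s).sub_const b).fun_pow 3).const_mul (F3 b)).div_const 6
        convert! this using 1
        simp; ring
      have := (((hd0 u hu).fun_sub ((hasDerivWithinAt_id u s).const_mul (F1 b))).fun_sub h1).fun_sub h2
      convert! this using 1
      ring
    have := taylor_step hg hb hL0 (fun u hu => step1 u hu) ht
    calc |f t - f b - F1 b * (t - b) - F2 b * (t - b) ^ 2 / 2 - F3 b * (t - b) ^ 3 / 6|
        = |(f t - F1 b * t - F2 b * (t - b) ^ 2 / 2 - F3 b * (t - b) ^ 3 / 6)
            - (f b - F1 b * b - F2 b * (b - b) ^ 2 / 2 - F3 b * (b - b) ^ 3 / 6)| := by ring_nf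
      _ ≤ L * |t - b| ^ 4 := this
  exact ⟨step0, step1 t ht⟩

lemma resid_id (h k fa fb fc g1a g1b g1c g2 g3 : ℝ) (hh : h ≠ 0) (hk : k ≠ 0) (hhk : h + k ≠ 0) :
    3 * (k/(h+k) * ((fb - fa)/h) + h/(h+k) * ((fc - fb)/k))
      - (k/(h+k) * g1a + 2 * g1b + h/(h+k) * g1c)
    = k/(h+k) * (-3*(fa - fb + g1b*h - g2*h^2/2 + g3*h^3/6)/h
                 - (g1a - g1b + g2*h - g3*h^2/2))
      + h/(h+k) * (3*(fc - fb - g1b*k - g2*k^2/2 - g3*k^3/6)/k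
                 - (g1c - g1b - g2*k - g3*k^2/2)) := by
  field_simp
  ring

set_option maxHeartbeats 1000000 in
lemma residual2 {A B L hh : ℝ} (hAB : A < B) {f : ℝ → ℝ}
    (hf : ContDiffOn ℝ 4 f (Icc A B))
    (hL : ∀ u ∈ Icc A B, |iteratedDerivWithin 4 f (Icc A B) u| ≤ L)
    {a b c : ℝ} (hab : a < b) (hbc : b < c)
    (ha : a ∈ Icc A B) (hb : b ∈ Icc A B) (hc : c ∈ Icc A B)
    (hha : b - a ≤ hh) (hhb : c - b ≤ hh) :
    |3 * ((c - b)/((b - a)+(c - b)) * ((f b - f a)/(b - a))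
        + (b - a)/((b - a)+(c - b)) * ((f c - f b)/(c - b)))
      - ((c - b)/((b - a)+(c - b)) * derivWithin f (Icc A B) a
         + 2 * derivWithin f (Icc A B) b
         + (b - a)/((b - a)+(c - b)) * derivWithin f (Icc A B) c)|
      ≤ 4 * L * hh ^ 3 := by
  have hs : UniqueDiffOn ℝ (Icc A B) := uniqueDiffOn_Icc hAB
  have hL0 : 0 ≤ L := le_trans (abs_nonneg _) (hL b hb)
  set F1 := iteratedDerivWithin 1 f (Icc A B) with hF1
  set F2 := iteratedDerivWithin 2 f (Icc A B) with hF2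
  set F3 := iteratedDerivWithin 3 f (Icc A B) with hF3
  have hda : derivWithin f (Icc A B) a = F1 a := (congrFun iteratedDerivWithin_one a).symm
  have hdb : derivWithin f (Icc A B) b = F1 b := (congrFun iteratedDerivWithin_one b).symm
  have hdc : derivWithin f (Icc A B) c = F1 c := (congrFun iteratedDerivWithin_one c).symm
  rw [hda, hdb, hdc]
  set h := b - a with hhdef
  set k := c - b with hkdef
  have hpos : 0 < h := by simp [hhdef]; linarith
  have kpos : 0 < k := by simp [hkdef]; linarith
  have hhh0 : 0 < hh := lt_of_lt_of_le hpos hha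
  obtain ⟨hA1, hB1⟩ := taylor4 hAB hf hL hb ha
  obtain ⟨hA2, hB2⟩ := taylor4 hAB hf hL hb hc
  rw [show |a - b| = h by rw [abs_sub_comm]; exact abs_of_pos hpos] at hA1 hB1
  rw [show |c - b| = k from abs_of_pos kpos] at hA2 hB2
  -- rewrite arguments
  have hA1' : |f a - f b + F1 b * h - F2 b * h^2/2 + F3 b * h^3/6| ≤ L * h^4 := by
    have : f a - f b + F1 b * h - F2 b * h^2/2 + F3 b * h^3/6
        = f a - f b - F1 b * (a - b) - F2 b * (a - b)^2/2 - F3 b * (a - b)^3/6 := by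
      simp only [hhdef]; ring
    rw [this]; exact hA1
  have hB1' : |F1 a - F1 b + F2 b * h - F3 b * h^2/2| ≤ L * h^3 := by
    have : F1 a - F1 b + F2 b * h - F3 b * h^2/2
        = F1 a - F1 b - F2 b * (a - b) - F3 b * (a - b)^2/2 := by
      simp only [hhdef]; ring
    rw [this]; exact hB1
  have hA2' : |f c - f b - F1 b * k - F2 b * k^2/2 - F3 b * k^3/6| ≤ L * k^4 := by
    have : f c - f b - F1 b * k - F2 b * k^2/2 - F3 b * k^3/6
        = f c - f b - F1 b * (c - b) - F2 b * (c - b)^2/2 - F3 b * (c - b)^3/6 := by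
      simp only [hkdef]
    rw [this]; exact hA2
  have hB2' : |F1 c - F1 b - F2 b * k - F3 b * k^2/2| ≤ L * k^3 := by
    have : F1 c - F1 b - F2 b * k - F3 b * k^2/2
        = F1 c - F1 b - F2 b * (c - b) - F3 b * (c - b)^2/2 := by
      simp only [hkdef]
    rw [this]; exact hB2
  have hid := resid_id h k (f a) (f b) (f c) (F1 a) (F1 b) (F1 c) (F2 b) (F3 b)
    (ne_of_gt hpos) (ne_of_gt kpos) (by positivity)
  rw [hid]
  -- now bound
  have hlam : 0 ≤ k/(h+k) := by positivity
  have hmu : 0 ≤ h/(h+k) := by positivity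
  have hsum : k/(h+k) + h/(h+k) = 1 := by
    rw [← add_div, show k + h = h + k from add_comm k h,
      div_self (ne_of_gt (by positivity : (0:ℝ) < h + k))]
  set X := -3*(f a - f b + F1 b*h - F2 b*h^2/2 + F3 b*h^3/6)/h
                 - (F1 a - F1 b + F2 b*h - F3 b*h^2/2) with hX
  set Y := 3*(f c - f b - F1 b*k - F2 b*k^2/2 - F3 b*k^3/6)/k
                 - (F1 c - F1 b - F2 b*k - F3 b*k^2/2) with hY
  have hXb : |X| ≤ 4 * L * hh^3 := by
    have h1 : |(-3)*(f a - f b + F1 b*h - F2 b*h^2/2 + F3 b*h^3/6)/h| ≤ 3 * L * h^3 := by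
      rw [abs_div, abs_mul, abs_of_pos hpos]
      rw [div_le_iff₀ hpos]
      calc |(-3 : ℝ)| * |f a - f b + F1 b*h - F2 b*h^2/2 + F3 b*h^3/6|
          ≤ 3 * (L * h^4) := by
            rw [abs_neg, abs_of_pos (by norm_num : (0:ℝ) < 3)]
            exact mul_le_mul_of_nonneg_left hA1' (by norm_num)
        _ = 3 * L * h^3 * h := by ring
    have h3 : h^3 ≤ hh^3 := pow_le_pow_left₀ (le_of_lt hpos) hha 3
    calc |X| ≤ |(-3)*(f a - f b + F1 b*h - F2 b*h^2/2 + F3 b*h^3/6)/h|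
          + |F1 a - F1 b + F2 b*h - F3 b*h^2/2| := by
          rw [hX]
          have : -3*(f a - f b + F1 b*h - F2 b*h^2/2 + F3 b*h^3/6)/h
                 - (F1 a - F1 b + F2 b*h - F3 b*h^2/2)
              = (-3)*(f a - f b + F1 b*h - F2 b*h^2/2 + F3 b*h^3/6)/h
                 + -(F1 a - F1 b + F2 b*h - F3 b*h^2/2) := by ring
          rw [this]
          exact le_trans (abs_add_le _ _) (by rw [abs_neg])
      _ ≤ 3 * L * h^3 + L * h^3 := add_le_add h1 hB1'
      _ = 4 * L * h^3 := by ring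
      _ ≤ 4 * L * hh^3 := mul_le_mul_of_nonneg_left h3 (by linarith : (0:ℝ) ≤ 4*L)
  have hYb : |Y| ≤ 4 * L * hh^3 := by
    have h1 : |3*(f c - f b - F1 b*k - F2 b*k^2/2 - F3 b*k^3/6)/k| ≤ 3 * L * k^3 := by
      rw [abs_div, abs_mul, abs_of_pos kpos]
      rw [div_le_iff₀ kpos]
      calc |(3 : ℝ)| * |f c - f b - F1 b*k - F2 b*k^2/2 - F3 b*k^3/6|
          ≤ 3 * (L * k^4) := by
            rw [abs_of_pos (by norm_num : (0:ℝ) < 3)]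
            exact mul_le_mul_of_nonneg_left hA2' (by norm_num)
        _ = 3 * L * k^3 * k := by ring
    have h3 : k^3 ≤ hh^3 := pow_le_pow_left₀ (le_of_lt kpos) hhb 3
    calc |Y| ≤ |3*(f c - f b - F1 b*k - F2 b*k^2/2 - F3 b*k^3/6)/k|
          + |F1 c - F1 b - F2 b*k - F3 b*k^2/2| := by
          rw [hY]
          have : 3*(f c - f b - F1 b*k - F2 b*k^2/2 - F3 b*k^3/6)/k
                 - (F1 c - F1 b - F2 b*k - F3 b*k^2/2)
              = 3*(f c - f b - F1 b*k - F2 b*k^2/2 - F3 b*k^3/6)/k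
                 + -(F1 c - F1 b - F2 b*k - F3 b*k^2/2) := by ring
          rw [this]
          exact le_trans (abs_add_le _ _) (by rw [abs_neg])
      _ ≤ 3 * L * k^3 + L * k^3 := add_le_add h1 hB2'
      _ = 4 * L * k^3 := by ring
      _ ≤ 4 * L * hh^3 := mul_le_mul_of_nonneg_left h3 (by linarith : (0:ℝ) ≤ 4*L)
  calc |k/(h+k) * X + h/(h+k) * Y|
      ≤ |k/(h+k) * X| + |h/(h+k) * Y| := abs_add_le _ _
    _ = k/(h+k) * |X| + h/(h+k) * |Y| := by
        rw [abs_mul, abs_mul, abs_of_nonneg hlam, abs_of_nonneg hmu]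
    _ ≤ k/(h+k) * (4*L*hh^3) + h/(h+k) * (4*L*hh^3) :=
        add_le_add (mul_le_mul_of_nonneg_left hXb hlam) (mul_le_mul_of_nonneg_left hYb hmu)
    _ = (k/(h+k) + h/(h+k)) * (4*L*hh^3) := by ring
    _ = 4 * L * hh^3 := by rw [hsum]; ring

lemma pow_half_le (a b : ℕ) (h : a ≤ b + 1) : ((1:ℝ)/2)^b ≤ 2*((1:ℝ)/2)^a := by
  have h1 : ((1:ℝ)/2)^(b+1) ≤ ((1:ℝ)/2)^a :=
    pow_le_pow_of_le_one (by norm_num) (by norm_num) h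
  have h2 : ((1:ℝ)/2)^(b+1) = ((1:ℝ)/2)^b * (1/2) := pow_succ _ _
  linarith

set_option maxHeartbeats 1000000 in
/-- Monotone spline with maximum regularity: solving the modified
block-diagonal system (left and right subsystems, `ḟᵢ₀ = f̃ᵢ₀` fixed),
written row-wise as `λⱼ₋₁ḟⱼ₋₁ + 2ḟⱼ + μⱼ₋₁ḟⱼ₊₁ = 3(λⱼ₋₁mⱼ₋₁ + μⱼ₋₁mⱼ)` for
`2 ≤ j ≤ n−1`, `j ≠ i₀`, yields a constant `C = C(K, L, T)` and integers
`l₀ < i₀ < l₁` with errors `C·ĥ^{min(3,p+1)}` for `2 ≤ i ≤ l₀` and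
`l₁ ≤ i ≤ n−1`, and `C·ĥ^{min(3,p)}` for `l₀ < i < l₁`; moreover, the
resulting piecewise cubic is `C²` at every interior knot `xⱼ`, `j ≠ i₀`. -/
theorem monotone_spline_max_regularity (K L T : ℝ) (hK : 0 < K) (hT : 0 < T) :
    ∃ C > 0, ∀ (p : ℝ), 0 < p →
      ∀ (n i0 : ℕ) (x : ℕ → ℝ) (f : ℝ → ℝ) (ftil hhat : ℝ) (df : ℕ → ℝ),
      2 ≤ i0 → i0 ≤ n - 1 →
      (∀ i, 1 ≤ i → i ≤ n - 1 → x i < x (i + 1)) →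
      hhat < 1 →
      (∀ i, 1 ≤ i → i ≤ n - 1 → hstep x i ≤ hhat) →
      (∃ i, 1 ≤ i ∧ i ≤ n - 1 ∧ hhat = hstep x i) →
      ContDiffOn ℝ 4 f (Set.Icc (x 1) (x n)) →
      (∀ t ∈ Set.Icc (x 1) (x n),
        |iteratedDerivWithin 4 f (Set.Icc (x 1) (x n)) t| ≤ L) →
      (∀ j, 1 ≤ j → j ≤ n - 1 → hhat / hstep x j ≤ K) →
      ((3 : ℝ) - Real.logb 2 hhat < (i0 : ℝ)) →
      ((i0 : ℝ) < (n : ℝ) - 1 + Real.logb 2 hhat) →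
      |derivWithin f (Set.Icc (x 1) (x n)) (x i0) - ftil| ≤ T * hhat ^ p →
      df 1 = derivWithin f (Set.Icc (x 1) (x n)) (x 1) →
      df n = derivWithin f (Set.Icc (x 1) (x n)) (x n) →
      df i0 = ftil →
      (∀ j, 2 ≤ j → j ≤ n - 1 → j ≠ i0 →
        lamb x (j - 1) * df (j - 1) + 2 * df j + mub x (j - 1) * df (j + 1)
          = 3 * (lamb x (j - 1) * mslope x f (j - 1) + mub x (j - 1) * mslope x f j)) →
      ((⌊(i0 : ℝ) - 2 + Real.logb 2 hhat⌋ + 1 < (i0 : ℤ) ∧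
          (i0 : ℤ) < ⌈(i0 : ℝ) + 2 - Real.logb 2 hhat⌉ - 1) ∧
        (∀ i : ℕ, 2 ≤ i → (i : ℤ) ≤ ⌊(i0 : ℝ) - 2 + Real.logb 2 hhat⌋ + 1 →
          |df i - derivWithin f (Set.Icc (x 1) (x n)) (x i)|
            ≤ C * hhat ^ (min 3 (p + 1))) ∧
        (∀ i : ℕ, ⌈(i0 : ℝ) + 2 - Real.logb 2 hhat⌉ - 1 ≤ (i : ℤ) → i ≤ n - 1 →
          |df i - derivWithin f (Set.Icc (x 1) (x n)) (x i)|
            ≤ C * hhat ^ (min 3 (p + 1))) ∧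
        (∀ i : ℕ, ⌊(i0 : ℝ) - 2 + Real.logb 2 hhat⌋ + 1 < (i : ℤ) →
          (i : ℤ) < ⌈(i0 : ℝ) + 2 - Real.logb 2 hhat⌉ - 1 →
          |df i - derivWithin f (Set.Icc (x 1) (x n)) (x i)|
            ≤ C * hhat ^ (min 3 p)) ∧
        (∀ j, 2 ≤ j → j ≤ n - 1 → j ≠ i0 →
          deriv (deriv (hermite (x (j - 1)) (x j) (f (x (j - 1))) (f (x j))
              (df (j - 1)) (df j))) (x j)
            = deriv (deriv (hermite (x j) (x (j + 1)) (f (x j)) (f (x (j + 1)))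
                (df j) (df (j + 1)))) (x j))) := by
  refine ⟨4*|L| + T + 1, by positivity, ?_⟩
  intro p hp n i0 x f ftil hhat df hi02 hi0n1 hxlt hh1 hhle hhex hf hL hKb hlog1 hlog2
    hftil hdf1 hdfn hdfi0 hrow
  obtain ⟨ie, hie1, hie2, hieeq⟩ := hhex
  have hhpos : 0 < hhat := by
    rw [hieeq]; exact sub_pos.2 (hxlt ie hie1 hie2)
  have hlb : Real.logb 2 hhat < 0 := Real.logb_neg one_lt_two hhpos hh1
  have hi03 : (3:ℝ) < (i0:ℝ) := by linarith
  have hi04 : 4 ≤ i0 := by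
    have : (3:ℕ) < i0 := by exact_mod_cast hi03
    omega
  have hi0nR : (i0:ℝ) + 1 < (n:ℝ) := by linarith
  have hi0n' : i0 + 2 ≤ n := by
    have : i0 + 1 < n := by exact_mod_cast hi0nR
    omega
  have hn6 : 6 ≤ n := by omega
  have hxmono : ∀ j, j ≤ n → ∀ i, 1 ≤ i → i ≤ j → x i ≤ x j := by
    intro j
    induction j with
    | zero => intro _ i h1 h2; omega
    | succ m ih =>
      intro hjn i h1 h2
      rcases Nat.eq_or_lt_of_le h2 with h | h
      · exact le_of_eq (congrArg x h)
      · have h4 : i ≤ m := by omega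
        have hm1 : 1 ≤ m := by omega
        calc x i ≤ x m := ih (by omega) i h1 h4
          _ ≤ x (m+1) := le_of_lt (hxlt m hm1 (by omega))
  have hx1n : x 1 < x n :=
    lt_of_lt_of_le (hxlt 1 le_rfl (by omega)) (hxmono n le_rfl 2 (by norm_num) (by omega))
  have hmem : ∀ i, 1 ≤ i → i ≤ n → x i ∈ Set.Icc (x 1) (x n) :=
    fun i h1 h2 => ⟨hxmono i h2 1 le_rfl h1, hxmono n le_rfl i h1 h2⟩
  have hL0 : 0 ≤ L := le_trans (abs_nonneg _) (hL (x 1) (hmem 1 le_rfl (by omega)))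
  have hTp0 : 0 ≤ T * hhat ^ p := le_of_lt (mul_pos hT (Real.rpow_pos_of_pos hhpos p))
  -- the max-principle error bound
  have key : ∀ j, 1 ≤ j → j ≤ n →
      |df j - derivWithin f (Set.Icc (x 1) (x n)) (x j)|
        ≤ 4*L*hhat^3 + T*hhat^p*(1/2:ℝ)^(((j:ℤ) - (i0:ℤ)).natAbs) := by
    obtain ⟨jm, hjmmem, hjmmax⟩ := Finset.exists_max_image (Finset.Icc 1 n)
      (fun j => |df j - derivWithin f (Set.Icc (x 1) (x n)) (x j)|
        - (4*L*hhat^3 + T*hhat^p*(1/2:ℝ)^(((j:ℤ) - (i0:ℤ)).natAbs)))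
      ⟨1, Finset.mem_Icc.2 ⟨le_rfl, by omega⟩⟩
    rw [Finset.mem_Icc] at hjmmem
    suffices hjm0 : |df jm - derivWithin f (Set.Icc (x 1) (x n)) (x jm)|
        - (4*L*hhat^3 + T*hhat^p*(1/2:ℝ)^(((jm:ℤ) - (i0:ℤ)).natAbs)) ≤ 0 by
      intro j h1 h2
      have h3 := hjmmax j (Finset.mem_Icc.2 ⟨h1, h2⟩)
      linarith
    have hwnn : ∀ j : ℕ, 0 ≤ 4*L*hhat^3 + T*hhat^p*(1/2:ℝ)^(((j:ℤ) - (i0:ℤ)).natAbs) := by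
      intro j
      have h1 : (0:ℝ) < hhat ^ p := Real.rpow_pos_of_pos hhpos p
      positivity
    by_cases hj1 : jm = 1
    · rw [hj1, hdf1]
      simp only [sub_self, abs_zero]
      linarith [hwnn 1]
    by_cases hjn : jm = n
    · rw [hjn, hdfn]
      simp only [sub_self, abs_zero]
      linarith [hwnn n]
    by_cases hji0 : jm = i0
    · rw [hji0, hdfi0]
      have h1 : |ftil - derivWithin f (Set.Icc (x 1) (x n)) (x i0)| ≤ T * hhat^p := by
        rw [abs_sub_comm]; exact hftil
      have h2 : (((i0:ℤ) - (i0:ℤ)).natAbs) = 0 := by omega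
      rw [h2, pow_zero, mul_one]
      have h3 : (0:ℝ) ≤ 4*L*hhat^3 := by positivity
      linarith
    · -- interior knot
      have h2jm : 2 ≤ jm := by omega
      have hjmn1 : jm ≤ n - 1 := by omega
      have hj1eq : jm - 1 + 1 = jm := by omega
      have hrj := hrow jm h2jm hjmn1 hji0
      simp only [lamb, mub, mslope, hstep, hj1eq] at hrj
      have haltb : x (jm-1) < x jm := by
        have := hxlt (jm-1) (by omega) (by omega)
        rwa [hj1eq] at this
      have hbltc : x jm < x (jm+1) := hxlt jm (by omega) (by omega)
      have hstepa : x jm - x (jm-1) ≤ hhat := by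
        have := hhle (jm-1) (by omega) (by omega)
        simp only [hstep, hj1eq] at this
        exact this
      have hstepb : x (jm+1) - x jm ≤ hhat := by
        have := hhle jm (by omega) (by omega)
        simp only [hstep] at this
        exact this
      have hres := residual2 hx1n hf hL haltb hbltc
        (hmem (jm-1) (by omega) (by omega)) (hmem jm (by omega) (by omega))
        (hmem (jm+1) (by omega) (by omega)) hstepa hstepb
      set a := x (jm-1)
      set b := x jm
      set c := x (jm+1)
      set Fd := derivWithin f (Set.Icc (x 1) (x n)) with hFd
      set lam := (c - b)/((b - a)+(c - b)) with hlamdef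
      set mu := (b - a)/((b - a)+(c - b)) with hmudef
      have hlam0 : 0 ≤ lam := by
        rw [hlamdef]
        apply div_nonneg <;> linarith
      have hmu0 : 0 ≤ mu := by
        rw [hmudef]
        apply div_nonneg <;> linarith
      have hlammu : lam + mu = 1 := by
        rw [hlamdef, hmudef, ← add_div,
          show c - b + (b - a) = (b - a) + (c - b) by ring,
          div_self (by linarith : (b - a) + (c - b) ≠ 0)]
      have hkey2 : 2*(df jm - Fd b)
          = (3 * (lam * ((f b - f a)/(b - a)) + mu * ((f c - f b)/(c - b)))
              - (lam * Fd a + 2 * Fd b + mu * Fd c))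
            - lam*(df (jm-1) - Fd a) - mu*(df (jm+1) - Fd c) := by
        linear_combination hrj
      -- distances
      set djm := (((jm:ℤ) - (i0:ℤ)).natAbs) with hdjm
      set dm := ((((jm-1:ℕ):ℤ) - (i0:ℤ)).natAbs) with hdm
      set dp := ((((jm+1:ℕ):ℤ) - (i0:ℤ)).natAbs) with hdp
      have hdm1 : djm ≤ dm + 1 := by
        rw [hdjm, hdm]
        omega
      have hdp1 : djm ≤ dp + 1 := by
        rw [hdjm, hdp]
        omega
      have hpm : ((1:ℝ)/2)^dm ≤ 2*(1/2)^djm := pow_half_le djm dm hdm1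
      have hpp : ((1:ℝ)/2)^dp ≤ 2*(1/2)^djm := pow_half_le djm dp hdp1
      set P := 4*L*hhat^3 with hP
      set Q := T*hhat^p*(1/2:ℝ)^djm with hQ
      set M := |df jm - Fd b| - (P + Q) with hM
      have hQ0 : 0 ≤ (1/2:ℝ)^djm := by positivity
      have hwm : T*hhat^p*(1/2:ℝ)^dm ≤ 2*Q := by
        rw [hQ]
        calc T*hhat^p*(1/2:ℝ)^dm ≤ T*hhat^p*(2*(1/2)^djm) :=
              mul_le_mul_of_nonneg_left hpm hTp0
          _ = 2*(T*hhat^p*(1/2:ℝ)^djm) := by ring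
      have hwp : T*hhat^p*(1/2:ℝ)^dp ≤ 2*Q := by
        rw [hQ]
        calc T*hhat^p*(1/2:ℝ)^dp ≤ T*hhat^p*(2*(1/2)^djm) :=
              mul_le_mul_of_nonneg_left hpp hTp0
          _ = 2*(T*hhat^p*(1/2:ℝ)^djm) := by ring
      have hE1 : |df (jm-1) - Fd a| ≤ P + 2*Q + M := by
        have h3 := hjmmax (jm-1) (Finset.mem_Icc.2 ⟨by omega, by omega⟩)
        have : |df (jm-1) - Fd a| - (P + T*hhat^p*(1/2:ℝ)^dm) ≤ M := h3
        linarith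
      have hE2 : |df (jm+1) - Fd c| ≤ P + 2*Q + M := by
        have h3 := hjmmax (jm+1) (Finset.mem_Icc.2 ⟨by omega, by omega⟩)
        have : |df (jm+1) - Fd c| - (P + T*hhat^p*(1/2:ℝ)^dp) ≤ M := h3
        linarith
      have habs2 : 2*|df jm - Fd b| ≤ P + lam*(P + 2*Q + M) + mu*(P + 2*Q + M) := by
        have h1 : 2*|df jm - Fd b| = |2*(df jm - Fd b)| := by
          rw [abs_mul, abs_of_pos (by norm_num : (0:ℝ) < 2)]
        rw [h1, hkey2]
        have h2 : |(3 * (lam * ((f b - f a)/(b - a)) + mu * ((f c - f b)/(c - b)))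
              - (lam * Fd a + 2 * Fd b + mu * Fd c))
            - lam*(df (jm-1) - Fd a) - mu*(df (jm+1) - Fd c)|
            ≤ |3 * (lam * ((f b - f a)/(b - a)) + mu * ((f c - f b)/(c - b)))
              - (lam * Fd a + 2 * Fd b + mu * Fd c)|
              + lam*|df (jm-1) - Fd a| + mu*|df (jm+1) - Fd c| := by
          calc |(3 * (lam * ((f b - f a)/(b - a)) + mu * ((f c - f b)/(c - b)))
              - (lam * Fd a + 2 * Fd b + mu * Fd c))
            - lam*(df (jm-1) - Fd a) - mu*(df (jm+1) - Fd c)|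
              ≤ |(3 * (lam * ((f b - f a)/(b - a)) + mu * ((f c - f b)/(c - b)))
              - (lam * Fd a + 2 * Fd b + mu * Fd c))
            - lam*(df (jm-1) - Fd a)| + |mu*(df (jm+1) - Fd c)| := abs_sub _ _
            _ ≤ |3 * (lam * ((f b - f a)/(b - a)) + mu * ((f c - f b)/(c - b)))
              - (lam * Fd a + 2 * Fd b + mu * Fd c)|
              + |lam*(df (jm-1) - Fd a)| + |mu*(df (jm+1) - Fd c)| :=
                add_le_add_left (abs_sub _ _) _
            _ = |3 * (lam * ((f b - f a)/(b - a)) + mu * ((f c - f b)/(c - b)))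
              - (lam * Fd a + 2 * Fd b + mu * Fd c)|
              + lam*|df (jm-1) - Fd a| + mu*|df (jm+1) - Fd c| := by
                rw [abs_mul, abs_mul, abs_of_nonneg hlam0, abs_of_nonneg hmu0]
        refine le_trans h2 ?_
        have h4 : lam*|df (jm-1) - Fd a| ≤ lam*(P + 2*Q + M) :=
          mul_le_mul_of_nonneg_left hE1 hlam0
        have h5 : mu*|df (jm+1) - Fd c| ≤ mu*(P + 2*Q + M) :=
          mul_le_mul_of_nonneg_left hE2 hmu0
        have h6 : |3 * (lam * ((f b - f a)/(b - a)) + mu * ((f c - f b)/(c - b)))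
              - (lam * Fd a + 2 * Fd b + mu * Fd c)| ≤ P := hres
        exact add_le_add (add_le_add h6 h4) h5
      have h7 : lam*(P + 2*Q + M) + mu*(P + 2*Q + M) = P + 2*Q + M := by
        rw [← add_mul, hlammu, one_mul]
      have h8 : |df jm - Fd b| = P + Q + M := by rw [hM]; ring
      show |df jm - Fd b| - (P + Q) ≤ 0
      linarith
  have hfloor : ⌊(i0 : ℝ) - 2 + Real.logb 2 hhat⌋ + 1 < (i0 : ℤ) := by
    have h1 : ⌊(i0 : ℝ) - 2 + Real.logb 2 hhat⌋ < (i0:ℤ) - 1 := by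
      rw [Int.floor_lt]
      push_cast
      linarith
    omega
  have hceil : (i0 : ℤ) < ⌈(i0 : ℝ) + 2 - Real.logb 2 hhat⌉ - 1 := by
    have h1 : (i0:ℤ) + 1 < ⌈(i0 : ℝ) + 2 - Real.logb 2 hhat⌉ := by
      rw [Int.lt_ceil]
      push_cast
      linarith
    omega
  have hh3 : hhat^(3:ℕ) = hhat^((3:ℝ)) := by
    rw [← Real.rpow_natCast hhat 3]
    norm_num
  refine ⟨⟨hfloor, hceil⟩, ?_, ?_, ?_, ?_⟩
  · -- outer left
    intro i h2i hil0
    have hii0 : (i:ℤ) < (i0:ℤ) := lt_of_le_of_lt hil0 hfloor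
    have hin : i ≤ n := by omega
    set d := (((i:ℤ) - (i0:ℤ)).natAbs) with hd
    have hdge : ((i0:ℤ) - (i:ℤ)) ≤ (d:ℤ) := by rw [hd]; omega
    have hiR : (i:ℝ) ≤ (i0 : ℝ) - 2 + Real.logb 2 hhat + 1 := by
      have h1 : ((i:ℤ):ℝ) ≤ (⌊(i0 : ℝ) - 2 + Real.logb 2 hhat⌋:ℝ) + 1 := by
        exact_mod_cast hil0
      have h2 := Int.floor_le ((i0 : ℝ) - 2 + Real.logb 2 hhat)
      push_cast at h1 ⊢
      linarith
    have hdR : -((d:ℝ)) ≤ Real.logb 2 hhat := by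
      have h1 : ((i0:ℝ) - (i:ℝ)) ≤ (d:ℝ) := by exact_mod_cast hdge
      linarith
    have hhalf : ((1:ℝ)/2)^d ≤ hhat := by
      have e1 : ((1:ℝ)/2)^d = (2:ℝ)^(-(d:ℝ)) := by
        rw [one_div, inv_pow, ← Real.rpow_natCast (2:ℝ) d,
          ← Real.rpow_neg (by norm_num : (0:ℝ) ≤ 2)]
      rw [e1]
      calc (2:ℝ)^(-(d:ℝ)) ≤ (2:ℝ)^(Real.logb 2 hhat) :=
            Real.rpow_le_rpow_of_exponent_le one_le_two hdR
        _ = hhat := Real.rpow_logb two_pos (by norm_num) hhpos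
    have hk := key i (by omega) hin
    have hstep2 : T*hhat^p*((1:ℝ)/2)^d ≤ T*(hhat^(p+1)) := by
      rw [Real.rpow_add_one (ne_of_gt hhpos) p]
      calc T*hhat^p*((1:ℝ)/2)^d ≤ T*hhat^p*hhat := mul_le_mul_of_nonneg_left hhalf hTp0
        _ = T*(hhat^p*hhat) := by ring
    have hmin1 : hhat^((3:ℝ)) ≤ hhat^(min 3 (p+1)) :=
      Real.rpow_le_rpow_of_exponent_ge hhpos (le_of_lt hh1) (min_le_left _ _)
    have hmin2 : hhat^(p+1) ≤ hhat^(min 3 (p+1)) :=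
      Real.rpow_le_rpow_of_exponent_ge hhpos (le_of_lt hh1) (min_le_right _ _)
    have hXpos : (0:ℝ) < hhat^(min 3 (p+1)) := Real.rpow_pos_of_pos hhpos _
    have c1 : 4*L*hhat^(3:ℕ) ≤ 4*L*hhat^(min 3 (p+1)) := by
      rw [hh3]
      exact mul_le_mul_of_nonneg_left hmin1 (by linarith : (0:ℝ) ≤ 4*L)
    have c2 : T*(hhat^(p+1)) ≤ T*hhat^(min 3 (p+1)) :=
      mul_le_mul_of_nonneg_left hmin2 (le_of_lt hT)
    have hLabs : L ≤ |L| := le_abs_self L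
    have c3 : 4*L*hhat^(min 3 (p+1)) + T*hhat^(min 3 (p+1))
        ≤ (4*|L| + T + 1)*hhat^(min 3 (p+1)) := by
      nlinarith
    linarith
  · -- outer right
    intro i hil1 hin1
    have hii0 : (i0:ℤ) < (i:ℤ) := by
      have := hceil
      omega
    have hi1 : 1 ≤ i := by omega
    have hin : i ≤ n := by omega
    set d := (((i:ℤ) - (i0:ℤ)).natAbs) with hd
    have hdge : ((i:ℤ) - (i0:ℤ)) ≤ (d:ℤ) := by rw [hd]; omega
    have hiR : (i0 : ℝ) + 2 - Real.logb 2 hhat - 1 ≤ (i:ℝ) := by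
      have h1 : (⌈(i0 : ℝ) + 2 - Real.logb 2 hhat⌉:ℝ) - 1 ≤ ((i:ℤ):ℝ) := by
        exact_mod_cast hil1
      have h2 := Int.le_ceil ((i0 : ℝ) + 2 - Real.logb 2 hhat)
      push_cast at h1 ⊢
      linarith
    have hdR : -((d:ℝ)) ≤ Real.logb 2 hhat := by
      have h1 : ((i:ℝ) - (i0:ℝ)) ≤ (d:ℝ) := by exact_mod_cast hdge
      linarith
    have hhalf : ((1:ℝ)/2)^d ≤ hhat := by
      have e1 : ((1:ℝ)/2)^d = (2:ℝ)^(-(d:ℝ)) := by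
        rw [one_div, inv_pow, ← Real.rpow_natCast (2:ℝ) d,
          ← Real.rpow_neg (by norm_num : (0:ℝ) ≤ 2)]
      rw [e1]
      calc (2:ℝ)^(-(d:ℝ)) ≤ (2:ℝ)^(Real.logb 2 hhat) :=
            Real.rpow_le_rpow_of_exponent_le one_le_two hdR
        _ = hhat := Real.rpow_logb two_pos (by norm_num) hhpos
    have hk := key i hi1 hin
    have hstep2 : T*hhat^p*((1:ℝ)/2)^d ≤ T*(hhat^(p+1)) := by
      rw [Real.rpow_add_one (ne_of_gt hhpos) p]
      calc T*hhat^p*((1:ℝ)/2)^d ≤ T*hhat^p*hhat := mul_le_mul_of_nonneg_left hhalf hTp0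
        _ = T*(hhat^p*hhat) := by ring
    have hmin1 : hhat^((3:ℝ)) ≤ hhat^(min 3 (p+1)) :=
      Real.rpow_le_rpow_of_exponent_ge hhpos (le_of_lt hh1) (min_le_left _ _)
    have hmin2 : hhat^(p+1) ≤ hhat^(min 3 (p+1)) :=
      Real.rpow_le_rpow_of_exponent_ge hhpos (le_of_lt hh1) (min_le_right _ _)
    have hXpos : (0:ℝ) < hhat^(min 3 (p+1)) := Real.rpow_pos_of_pos hhpos _
    have c1 : 4*L*hhat^(3:ℕ) ≤ 4*L*hhat^(min 3 (p+1)) := by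
      rw [hh3]
      exact mul_le_mul_of_nonneg_left hmin1 (by linarith : (0:ℝ) ≤ 4*L)
    have c2 : T*(hhat^(p+1)) ≤ T*hhat^(min 3 (p+1)) :=
      mul_le_mul_of_nonneg_left hmin2 (le_of_lt hT)
    have hLabs : L ≤ |L| := le_abs_self L
    have c3 : 4*L*hhat^(min 3 (p+1)) + T*hhat^(min 3 (p+1))
        ≤ (4*|L| + T + 1)*hhat^(min 3 (p+1)) := by
      nlinarith
    linarith
  · -- middle
    intro i hgt hlt
    have hfl : (1:ℤ) ≤ ⌊(i0 : ℝ) - 2 + Real.logb 2 hhat⌋ :=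
      Int.le_floor.2 (by push_cast; linarith)
    have hi1 : 1 ≤ i := by omega
    have hinR : (i:ℝ) < (i0:ℝ) + 1 - Real.logb 2 hhat := by
      have h1 : ((i:ℤ):ℝ) ≤ (⌈(i0 : ℝ) + 2 - Real.logb 2 hhat⌉:ℝ) - 2 := by
        exact_mod_cast (by omega : (i:ℤ) ≤ ⌈(i0 : ℝ) + 2 - Real.logb 2 hhat⌉ - 2)
      have h2 := Int.ceil_lt_add_one ((i0 : ℝ) + 2 - Real.logb 2 hhat)
      push_cast at h1 ⊢
      linarith
    have hin : i ≤ n := by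
      have h1 : (i:ℝ) < (n:ℝ) := by linarith
      have : i < n := by exact_mod_cast h1
      omega
    have hk := key i hi1 hin
    have hhalfle1 : ((1:ℝ)/2)^(((i:ℤ) - (i0:ℤ)).natAbs) ≤ 1 :=
      pow_le_one₀ (by norm_num) (by norm_num)
    have hstep2 : T*hhat^p*((1:ℝ)/2)^(((i:ℤ) - (i0:ℤ)).natAbs) ≤ T*hhat^p := by
      calc T*hhat^p*((1:ℝ)/2)^(((i:ℤ) - (i0:ℤ)).natAbs) ≤ T*hhat^p*1 :=
            mul_le_mul_of_nonneg_left hhalfle1 hTp0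
        _ = T*hhat^p := by ring
    have hmin1 : hhat^((3:ℝ)) ≤ hhat^(min 3 p) :=
      Real.rpow_le_rpow_of_exponent_ge hhpos (le_of_lt hh1) (min_le_left _ _)
    have hmin2 : hhat^p ≤ hhat^(min 3 p) :=
      Real.rpow_le_rpow_of_exponent_ge hhpos (le_of_lt hh1) (min_le_right _ _)
    have hXpos : (0:ℝ) < hhat^(min 3 p) := Real.rpow_pos_of_pos hhpos _
    have c1 : 4*L*hhat^(3:ℕ) ≤ 4*L*hhat^(min 3 p) := by
      rw [hh3]
      exact mul_le_mul_of_nonneg_left hmin1 (by linarith : (0:ℝ) ≤ 4*L)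
    have c2 : T*hhat^p ≤ T*hhat^(min 3 p) :=
      mul_le_mul_of_nonneg_left hmin2 (le_of_lt hT)
    have hLabs : L ≤ |L| := le_abs_self L
    have c3 : 4*L*hhat^(min 3 p) + T*hhat^(min 3 p)
        ≤ (4*|L| + T + 1)*hhat^(min 3 p) := by
      nlinarith
    linarith
  · -- C² at interior knots
    intro j h2 hn1 hne
    have hj1 : j - 1 + 1 = j := by omega
    have ha : x (j-1) < x j := by
      have := hxlt (j-1) (by omega) (by omega)
      rwa [hj1] at this
    have hb : x j < x (j+1) := hxlt j (by omega) (by omega)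
    have hr := hrow j h2 hn1 hne
    simp only [lamb, mub, mslope, hstep, hj1] at hr
    exact knot_eq ha hb hr
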